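/- Let μ1, μ2, μ3 > 0, ρ > 0, r1 ≥ 0 and 0 < r2 < 1 be real numbers. Define f : (0,∞)⁴ → ℝ by f(w, x, x', y) = 1[w > ρ]·(r1·w + 1[x < ρ]·r2·x + r2·y) + 1[w ≤ ρ]·1[x < ρ]·1[x' < x]·(r2·x + r2·y). Then the 4-fold Lebesgue integral ∫₀^∞∫₀^∞∫₀^∞∫₀^∞ f(w, x, x', y)·(1/μ1)·exp(−w/μ1)·(1/μ1)·exp(−x/μ1)·(1/μ2)·exp(−x'/μ2)·(1/μ3)·exp(−y/μ3) dw dx dx' dy equals r1·(ρ·exp(−ρ/μ1) + μ1·exp(−ρ/μ1)) + r2·exp(−ρ/μ1)·(μ1 − ρ·exp(−ρ/μ1) − μ1·exp(−ρ/μ1)) + r2·μ3·exp(−ρ/μ1) + r2·(1 − exp(−ρ/μ1))·[ −ρ·exp(−ρ/μ1)·(1 − exp(−ρ/μ2)) − μ1·exp(−ρ/μ1)·(1 − exp(−ρ/μ2)) − (ρ·μ1/(μ1+μ2))·exp(−ρ(μ1+μ2)/(μ1·μ2)) − (μ1²·μ2/(μ1+μ2)²)·exp(−ρ(μ1+μ2)/(μ1·μ2))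 + μ1²·μ2/(μ1+μ2)² + (μ1²/(μ1+μ2))·(1 − exp(−ρ(μ1+μ2)/(μ1·μ2))) ] + r2·μ3·(1 − exp(−ρ/μ1))·[ (μ1/(μ1+μ2))·(1 − exp(−ρ(μ1+μ2)/(μ1·μ2))) − exp(−ρ/μ1)·(1 − exp(−ρ/μ2)) ]. (This is the expected per-round reward E[V_primary] of the primary (Flashback) builder.) -/

import Mathlib

open MeasureTheory

section FlashbackHelpers
open MeasureTheory Set Filter Real


lemma fb_exp_intOn {a : ℝ} (ha : 0 < a) (c : ℝ) :
    IntegrableOn (fun x : ℝ => Real.exp (-x / a)) (Ioi c) := by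
  have h := exp_neg_integrableOn_Ioi c (show (0:ℝ) < 1/a by positivity)
  refine h.congr_fun (fun x _ => ?_) measurableSet_Ioi
  ring_nf

lemma fb_exp_tendsto {a : ℝ} (ha : 0 < a) :
    Tendsto (fun x : ℝ => Real.exp (-x / a)) atTop (nhds 0) := by
  have h1 : Tendsto (fun x : ℝ => x / a) atTop atTop :=
    tendsto_id.atTop_div_const ha
  have := (Real.tendsto_exp_neg_atTop_nhds_zero).comp h1
  refine this.congr fun x => ?_
  simp [Function.comp, neg_div]

lemma fb_exp_integral {a : ℝ} (ha : 0 < a) (c : ℝ) :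
    ∫ x in Ioi c, Real.exp (-x / a) = a * Real.exp (-c / a) := by
  have hd : ∀ x ∈ Ici c, HasDerivAt (fun x : ℝ => -a * Real.exp (-x / a))
      (Real.exp (-x / a)) x := by
    intro x _
    have h1 : HasDerivAt (fun x : ℝ => -x / a) (-1/a) x := by
      simpa using ((hasDerivAt_id x).neg.div_const a)
    have h2 := (Real.hasDerivAt_exp (-x / a)).comp x h1
    have h3 := h2.const_mul (-a)
    refine h3.congr_deriv ?_
    field_simp
  have ht : Tendsto (fun x : ℝ => -a * Real.exp (-x / a)) atTop (nhds 0) := by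
    have := (fb_exp_tendsto ha).const_mul (-a)
    simpa using this
  have := integral_Ioi_of_hasDerivAt_of_tendsto' hd (fb_exp_intOn ha c) ht
  rw [this]; ring

lemma fb_xexp_tendsto {a : ℝ} (ha : 0 < a) :
    Tendsto (fun x : ℝ => x * Real.exp (-x / a)) atTop (nhds 0) := by
  have h1 : Tendsto (fun x : ℝ => x / a) atTop atTop := tendsto_id.atTop_div_const ha
  have h2 : Tendsto (fun y : ℝ => y * Real.exp (-y)) atTop (nhds 0) := by
    simpa using tendsto_pow_mul_exp_neg_atTop_nhds_zero 1
  have h3 := (h2.comp h1).const_mul a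
  simp only [mul_zero] at h3
  refine h3.congr fun x => ?_
  simp only [Function.comp]
  rw [neg_div]
  field_simp

lemma fb_xexp_deriv {a : ℝ} (ha : 0 < a) (x : ℝ) :
    HasDerivAt (fun x : ℝ => -(a * x + a ^ 2) * Real.exp (-x / a))
      (x * Real.exp (-x / a)) x := by
  have h1 : HasDerivAt (fun x : ℝ => -x / a) (-1/a) x := by
    simpa using ((hasDerivAt_id x).neg.div_const a)
  have h2 := (Real.hasDerivAt_exp (-x / a)).comp x h1
  have h3 : HasDerivAt (fun x : ℝ => -(a * x + a ^ 2)) (-a) x := by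
    have h4 := (((hasDerivAt_id x).const_mul a).add_const (a^2)).neg
    simp only [mul_one] at h4
    exact h4
  have := h3.mul h2
  refine this.congr_deriv ?_
  rw [Function.comp_apply]
  field_simp
  ring

lemma fb_xexp_intOn {a : ℝ} (ha : 0 < a) {c : ℝ} (hc : 0 ≤ c) :
    IntegrableOn (fun x : ℝ => x * Real.exp (-x / a)) (Ioi c) := by
  refine integrableOn_Ioi_deriv_of_nonneg' (l := 0) (fun x _ => fb_xexp_deriv ha x)
    (fun x hx => ?_) ?_
  · have : (0:ℝ) < x := lt_of_le_of_lt hc hx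
    positivity
  · have h1 := fb_xexp_tendsto ha
    have h2 := (fb_exp_tendsto ha).const_mul (a^2)
    have := ((h1.const_mul a).add h2).neg
    simp only [mul_zero, add_zero, neg_zero] at this
    refine this.congr fun x => ?_
    ring

lemma fb_xexp_integral {a : ℝ} (ha : 0 < a) {c : ℝ} (hc : 0 ≤ c) :
    ∫ x in Ioi c, x * Real.exp (-x / a) = a * (c + a) * Real.exp (-c / a) := by
  have ht : Tendsto (fun x : ℝ => -(a * x + a ^ 2) * Real.exp (-x / a)) atTop (nhds 0) := by
    have h1 := fb_xexp_tendsto ha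
    have h2 := (fb_exp_tendsto ha).const_mul (a^2)
    have := ((h1.const_mul a).add h2).neg
    simp only [mul_zero, add_zero, neg_zero] at this
    refine this.congr fun x => ?_
    ring
  have := integral_Ioi_of_hasDerivAt_of_tendsto' (fun x _ => fb_xexp_deriv ha x)
    (fb_xexp_intOn ha hc) ht
  rw [this]; ring

lemma fb_split {g : ℝ → ℝ} {c d : ℝ} (hcd : c ≤ d) (h : IntegrableOn g (Ioi c)) :
    ∫ x in Ioc c d, g x = (∫ x in Ioi c, g x) - ∫ x in Ioi d, g x := by
  have hu : Ioc c d ∪ Ioi d = Ioi c := Ioc_union_Ioi_eq_Ioi hcd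
  have hdisj : Disjoint (Ioc c d) (Ioi d) := Ioc_disjoint_Ioi le_rfl
  have h1 : IntegrableOn g (Ioc c d) := h.mono_set Ioc_subset_Ioi_self
  have h2 : IntegrableOn g (Ioi d) := h.mono_set (Ioi_subset_Ioi hcd)
  have := setIntegral_union hdisj measurableSet_Ioi h1 h2
  rw [hu] at this
  linarith [this]

lemma fb_affine_intOn_Ioi {a : ℝ} (ha : 0 < a) {c : ℝ} (hc : 0 ≤ c) (p q : ℝ) :
    IntegrableOn (fun x : ℝ => (p * x + q) * Real.exp (-x / a)) (Ioi c) := by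
  have h1 := (fb_xexp_intOn ha hc).const_mul p
  have h2 := (fb_exp_intOn ha c).const_mul q
  have h12 : IntegrableOn
      (fun x : ℝ => p * (x * Real.exp (-x / a)) + q * Real.exp (-x / a)) (Ioi c) := h1.add h2
  refine h12.congr_fun (fun x _ => ?_) measurableSet_Ioi
  ring

lemma fb_affine_integral_Ioi {a : ℝ} (ha : 0 < a) {c : ℝ} (hc : 0 ≤ c) (p q : ℝ) :
    ∫ x in Ioi c, (p * x + q) * Real.exp (-x / a)
      = a * (p * (c + a) + q) * Real.exp (-c / a) := by
  have h1 := (fb_xexp_intOn ha hc).const_mul p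
  have h2 := (fb_exp_intOn ha c).const_mul q
  have key : ∫ x in Ioi c, (p * x + q) * Real.exp (-x / a)
      = ∫ x in Ioi c, (p * (x * Real.exp (-x / a)) + q * Real.exp (-x / a)) := by
    refine setIntegral_congr_fun measurableSet_Ioi (fun x _ => ?_)
    ring
  rw [key, integral_add h1 h2, integral_const_mul, integral_const_mul,
    fb_xexp_integral ha hc, fb_exp_integral ha c]
  ring

lemma fb_affine_integral_Ioc {a : ℝ} (ha : 0 < a) {c d : ℝ} (hc : 0 ≤ c) (hcd : c ≤ d)
    (p q : ℝ) :
    ∫ x in Ioc c d, (p * x + q) * Real.exp (-x / a)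
      = a * (p * (c + a) + q) * Real.exp (-c / a)
        - a * (p * (d + a) + q) * Real.exp (-d / a) := by
  rw [fb_split hcd (fb_affine_intOn_Ioi ha hc p q),
    fb_affine_integral_Ioi ha hc p q, fb_affine_integral_Ioi ha (hc.trans hcd) p q]

lemma fb_density_intOn {a : ℝ} (ha : 0 < a) {c : ℝ} (hc : 0 ≤ c) (p q : ℝ) :
    IntegrableOn (fun x : ℝ => (p * x + q) * ((1 / a) * Real.exp (-x / a))) (Ioi c) := by
  have h := (fb_affine_intOn_Ioi ha hc p q).const_mul (1 / a)
  have h' : IntegrableOn (fun x : ℝ => (1 / a) * ((p * x + q) * Real.exp (-x / a)))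
      (Ioi c) := h
  refine h'.congr_fun (fun x _ => ?_) measurableSet_Ioi
  ring

lemma fb_density_Ioi {a : ℝ} (ha : 0 < a) {c : ℝ} (hc : 0 ≤ c) (p q : ℝ) :
    ∫ x in Ioi c, (p * x + q) * ((1 / a) * Real.exp (-x / a))
      = (p * (c + a) + q) * Real.exp (-c / a) := by
  have key : ∫ x in Ioi c, (p * x + q) * ((1 / a) * Real.exp (-x / a))
      = ∫ x in Ioi c, (1 / a) * ((p * x + q) * Real.exp (-x / a)) := by
    refine setIntegral_congr_fun measurableSet_Ioi (fun x _ => ?_); ring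
  rw [key, integral_const_mul, fb_affine_integral_Ioi ha hc p q]
  field_simp

lemma fb_density_Ioc {a : ℝ} (ha : 0 < a) {c d : ℝ} (hc : 0 ≤ c) (hcd : c ≤ d) (p q : ℝ) :
    ∫ x in Ioc c d, (p * x + q) * ((1 / a) * Real.exp (-x / a))
      = (p * (c + a) + q) * Real.exp (-c / a) - (p * (d + a) + q) * Real.exp (-d / a) := by
  have key : ∫ x in Ioc c d, (p * x + q) * ((1 / a) * Real.exp (-x / a))
      = ∫ x in Ioc c d, (1 / a) * ((p * x + q) * Real.exp (-x / a)) := by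
    refine setIntegral_congr_fun measurableSet_Ioc (fun x _ => ?_); ring
  rw [key, integral_const_mul, fb_affine_integral_Ioc ha hc hcd p q]
  field_simp

lemma fb_indicator_intOn {g : ℝ → ℝ} {s t : Set ℝ} (hs : MeasurableSet s)
    (h : IntegrableOn g (s ∩ t)) :
    IntegrableOn (fun x => s.indicator g x) t := by
  rw [IntegrableOn, integrable_indicator_iff hs, IntegrableOn,
    Measure.restrict_restrict hs]
  exact h

lemma stage_w {μ ρ : ℝ} (hμ : 0 < μ) (hρ : 0 < ρ) (r1 B C : ℝ) :
    ∫ w in Ioi (0:ℝ), ((if w > ρ then (1:ℝ) else 0) * (r1 * w + B)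
        + (if w ≤ ρ then (1:ℝ) else 0) * C) * ((1 / μ) * Real.exp (-w / μ))
      = (r1 * (ρ + μ) + B) * Real.exp (-ρ / μ) + C * (1 - Real.exp (-ρ / μ)) := by
  have hf1 : IntegrableOn (fun w : ℝ => (r1 * w + B) * ((1 / μ) * Real.exp (-w / μ)))
      (Ioi ρ) := fb_density_intOn hμ hρ.le r1 B
  have hf2 : IntegrableOn (fun w : ℝ => (0 * w + C) * ((1 / μ) * Real.exp (-w / μ)))
      (Ioc 0 ρ) := (fb_density_intOn hμ le_rfl 0 C).mono_set Ioc_subset_Ioi_self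
  have hi1 : IntegrableOn
      (fun w => (Ioi ρ).indicator
        (fun w : ℝ => (r1 * w + B) * ((1 / μ) * Real.exp (-w / μ))) w) (Ioi 0) := by
    refine fb_indicator_intOn measurableSet_Ioi ?_
    rw [inter_eq_left.mpr (Ioi_subset_Ioi hρ.le)]
    exact hf1
  have hi2 : IntegrableOn
      (fun w => (Iic ρ).indicator
        (fun w : ℝ => (0 * w + C) * ((1 / μ) * Real.exp (-w / μ))) w) (Ioi 0) := by
    refine fb_indicator_intOn measurableSet_Iic ?_
    rw [inter_comm, Ioi_inter_Iic]
    exact hf2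
  have heq : EqOn
      (fun w : ℝ => ((if w > ρ then (1:ℝ) else 0) * (r1 * w + B)
        + (if w ≤ ρ then (1:ℝ) else 0) * C) * ((1 / μ) * Real.exp (-w / μ)))
      (fun w => (Ioi ρ).indicator
          (fun w : ℝ => (r1 * w + B) * ((1 / μ) * Real.exp (-w / μ))) w
        + (Iic ρ).indicator
          (fun w : ℝ => (0 * w + C) * ((1 / μ) * Real.exp (-w / μ))) w) (Ioi 0) := by
    intro w _
    by_cases hw : ρ < w
    · simp [Set.indicator_apply, mem_Ioi, mem_Iic, hw, not_le.2 hw]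
    · have hw' : w ≤ ρ := not_lt.1 hw
      simp [Set.indicator_apply, mem_Ioi, mem_Iic, hw, hw']
  rw [setIntegral_congr_fun measurableSet_Ioi heq, integral_add hi1 hi2,
    setIntegral_indicator measurableSet_Ioi, setIntegral_indicator measurableSet_Iic,
    inter_eq_right.mpr (Ioi_subset_Ioi hρ.le), Ioi_inter_Iic,
    fb_density_Ioi hμ hρ.le r1 B, fb_density_Ioc hμ le_rfl hρ.le 0 C]
  norm_num
  ring

lemma stage_x {μ ρ x' : ℝ} (hμ : 0 < μ) (hρ : 0 < ρ) (hx' : 0 < x')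
    (K p1 q1 p2 q2 : ℝ) :
    ∫ x in Ioi (0:ℝ), (K + (if x < ρ then (1:ℝ) else 0) * (p1 * x + q1)
        + (if x < ρ then (1:ℝ) else 0) * (if x' < x then (1:ℝ) else 0) * (p2 * x + q2))
        * ((1 / μ) * Real.exp (-x / μ))
      = K + ((p1 * (0 + μ) + q1) - (p1 * (ρ + μ) + q1) * Real.exp (-ρ / μ))
        + (if x' < ρ then (p2 * (x' + μ) + q2) * Real.exp (-x' / μ)
            - (p2 * (ρ + μ) + q2) * Real.exp (-ρ / μ) else 0) := by
  have hsub3 : Ioo x' ρ ⊆ Ioi (0:ℝ) := fun z hz => lt_trans hx' hz.1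
  have hi1 : IntegrableOn (fun x : ℝ => (0 * x + K) * ((1 / μ) * Real.exp (-x / μ)))
      (Ioi 0) := fb_density_intOn hμ le_rfl 0 K
  have hi2 : IntegrableOn
      (fun x => (Iio ρ).indicator
        (fun x : ℝ => (p1 * x + q1) * ((1 / μ) * Real.exp (-x / μ))) x) (Ioi 0) := by
    refine fb_indicator_intOn measurableSet_Iio ?_
    exact (fb_density_intOn hμ le_rfl p1 q1).mono_set inter_subset_right
  have hi3 : IntegrableOn
      (fun x => (Ioo x' ρ).indicator
        (fun x : ℝ => (p2 * x + q2) * ((1 / μ) * Real.exp (-x / μ))) x) (Ioi 0) := by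
    refine fb_indicator_intOn measurableSet_Ioo ?_
    refine (fb_density_intOn hμ hx'.le p2 q2).mono_set ?_
    exact fun z hz => hz.1.1
  have heq : EqOn
      (fun x : ℝ => (K + (if x < ρ then (1:ℝ) else 0) * (p1 * x + q1)
        + (if x < ρ then (1:ℝ) else 0) * (if x' < x then (1:ℝ) else 0) * (p2 * x + q2))
        * ((1 / μ) * Real.exp (-x / μ)))
      (fun x => (0 * x + K) * ((1 / μ) * Real.exp (-x / μ))
        + ((Iio ρ).indicator
            (fun x : ℝ => (p1 * x + q1) * ((1 / μ) * Real.exp (-x / μ))) x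
          + (Ioo x' ρ).indicator
            (fun x : ℝ => (p2 * x + q2) * ((1 / μ) * Real.exp (-x / μ))) x)) (Ioi 0) := by
    intro x _
    by_cases h1 : x < ρ <;> by_cases h2 : x' < x <;>
      simp [Set.indicator_apply, mem_Iio, mem_Ioo, h1, h2] <;> ring
  have hi23 : IntegrableOn
      (fun x => (Iio ρ).indicator
          (fun x : ℝ => (p1 * x + q1) * ((1 / μ) * Real.exp (-x / μ))) x
        + (Ioo x' ρ).indicator
          (fun x : ℝ => (p2 * x + q2) * ((1 / μ) * Real.exp (-x / μ))) x) (Ioi 0) :=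
    hi2.add hi3
  rw [setIntegral_congr_fun measurableSet_Ioi heq, integral_add hi1 hi23,
    integral_add hi2 hi3, setIntegral_indicator measurableSet_Iio,
    setIntegral_indicator measurableSet_Ioo,
    show Ioi (0:ℝ) ∩ Iio ρ = Ioo 0 ρ from Ioi_inter_Iio,
    inter_eq_right.mpr hsub3, fb_density_Ioi hμ le_rfl 0 K,
    ← integral_Ioc_eq_integral_Ioo, fb_density_Ioc hμ le_rfl hρ.le p1 q1]
  by_cases h : x' < ρ
  · rw [← integral_Ioc_eq_integral_Ioo, fb_density_Ioc hμ hx'.le h.le p2 q2, if_pos h]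
    norm_num
    ring
  · rw [Ioo_eq_empty h, if_neg h]
    norm_num

lemma stage_xp {μ1 μ2 ρ : ℝ} (hμ1 : 0 < μ1) (hμ2 : 0 < μ2) (hρ : 0 < ρ)
    (K s1 s2 s3 : ℝ) :
    ∫ x in Ioi (0:ℝ), (K + (if x < ρ then (1:ℝ) else 0)
        * ((s1 * x + s2) * Real.exp (-x / μ1) + s3)) * ((1 / μ2) * Real.exp (-x / μ2))
      = K + (μ1 * μ2 / (μ1 + μ2)) * (s1 / μ2 * (0 + μ1 * μ2 / (μ1 + μ2)) + s2 / μ2)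
        - (μ1 * μ2 / (μ1 + μ2)) * (s1 / μ2 * (ρ + μ1 * μ2 / (μ1 + μ2)) + s2 / μ2)
            * Real.exp (-ρ * (μ1 + μ2) / (μ1 * μ2))
        + s3 * (1 - Real.exp (-ρ / μ2)) := by
  set cc : ℝ := μ1 * μ2 / (μ1 + μ2) with hcc_def
  have hcc : 0 < cc := by rw [hcc_def]; positivity
  have hμ12 : μ1 + μ2 ≠ 0 := by positivity
  have hprod : ∀ x : ℝ, Real.exp (-x / μ1) * Real.exp (-x / μ2) = Real.exp (-x / cc) := by
    intro x
    rw [← Real.exp_add]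
    congr 1
    rw [hcc_def]
    field_simp
    ring
  have hi1 : IntegrableOn (fun x : ℝ => (0 * x + K) * ((1 / μ2) * Real.exp (-x / μ2)))
      (Ioi 0) := fb_density_intOn hμ2 le_rfl 0 K
  have hinner : IntegrableOn
      (fun x : ℝ => (s1 / μ2 * x + s2 / μ2) * Real.exp (-x / cc)
        + (0 * x + s3) * ((1 / μ2) * Real.exp (-x / μ2))) (Ioi 0) :=
    (fb_affine_intOn_Ioi hcc le_rfl (s1 / μ2) (s2 / μ2)).add
      (fb_density_intOn hμ2 le_rfl 0 s3)
  have hind : IntegrableOn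
      (fun x => (Iio ρ).indicator
        (fun x : ℝ => (s1 / μ2 * x + s2 / μ2) * Real.exp (-x / cc)
          + (0 * x + s3) * ((1 / μ2) * Real.exp (-x / μ2))) x) (Ioi 0) := by
    refine fb_indicator_intOn measurableSet_Iio ?_
    exact hinner.mono_set inter_subset_right
  have heq : EqOn
      (fun x : ℝ => (K + (if x < ρ then (1:ℝ) else 0)
        * ((s1 * x + s2) * Real.exp (-x / μ1) + s3)) * ((1 / μ2) * Real.exp (-x / μ2)))
      (fun x => (0 * x + K) * ((1 / μ2) * Real.exp (-x / μ2))
        + (Iio ρ).indicator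
          (fun x : ℝ => (s1 / μ2 * x + s2 / μ2) * Real.exp (-x / cc)
            + (0 * x + s3) * ((1 / μ2) * Real.exp (-x / μ2))) x) (Ioi 0) := by
    intro x _
    by_cases h : x < ρ
    · simp only [Set.indicator_apply, mem_Iio, h, if_pos, if_true]
      rw [← hprod x]
      field_simp
      ring
    · simp only [Set.indicator_apply, mem_Iio, h, if_false]
      ring
  rw [setIntegral_congr_fun measurableSet_Ioi heq, integral_add hi1 hind,
    fb_density_Ioi hμ2 le_rfl 0 K, setIntegral_indicator measurableSet_Iio,
    show Ioi (0:ℝ) ∩ Iio ρ = Ioo 0 ρ from Ioi_inter_Iio,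
    ← integral_Ioc_eq_integral_Ioo,
    integral_add ((fb_affine_intOn_Ioi hcc le_rfl (s1 / μ2) (s2 / μ2)).mono_set
        Ioc_subset_Ioi_self)
      ((fb_density_intOn hμ2 le_rfl 0 s3).mono_set Ioc_subset_Ioi_self),
    fb_affine_integral_Ioc hcc le_rfl hρ.le (s1 / μ2) (s2 / μ2),
    fb_density_Ioc hμ2 le_rfl hρ.le 0 s3]
  have hexp : -ρ / cc = -ρ * (μ1 + μ2) / (μ1 * μ2) := by
    rw [hcc_def]
    field_simp
  rw [hexp]
  norm_num [Real.exp_zero]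
  ring

end FlashbackHelpers

open Set Filter Real in
/-- Proposition 3 (primary builder reward): the expectation of the primary
(Flashback) builder's per-round reward, written as a 4-fold Lebesgue integral
against the product of exponential densities (with means `μ1, μ1, μ2, μ3` for
`W, X, X', Y` respectively), equals the stated closed form. -/
theorem flashback_primary_builder_reward
    (μ1 μ2 μ3 ρ r1 r2 : ℝ) (hμ1 : 0 < μ1) (hμ2 : 0 < μ2) (hμ3 : 0 < μ3)
    (hρ : 0 < ρ) (hr1 : 0 ≤ r1) (hr2_pos : 0 < r2) (hr2_lt : r2 < 1) :
    (∫ y in Set.Ioi (0:ℝ), ∫ x' in Set.Ioi (0:ℝ), ∫ x in Set.Ioi (0:ℝ),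
      ∫ w in Set.Ioi (0:ℝ),
        ((if w > ρ then (1:ℝ) else 0) *
            (r1 * w + (if x < ρ then (1:ℝ) else 0) * r2 * x + r2 * y)
          + (if w ≤ ρ then (1:ℝ) else 0) * (if x < ρ then (1:ℝ) else 0) *
            (if x' < x then (1:ℝ) else 0) * (r2 * x + r2 * y)) *
        ((1 / μ1) * Real.exp (-w / μ1)) * ((1 / μ1) * Real.exp (-x / μ1)) *
        ((1 / μ2) * Real.exp (-x' / μ2)) * ((1 / μ3) * Real.exp (-y / μ3)))
    = r1 * (ρ * Real.exp (-ρ / μ1) + μ1 * Real.exp (-ρ / μ1))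
      + r2 * Real.exp (-ρ / μ1) *
          (μ1 - ρ * Real.exp (-ρ / μ1) - μ1 * Real.exp (-ρ / μ1))
      + r2 * μ3 * Real.exp (-ρ / μ1)
      + r2 * (1 - Real.exp (-ρ / μ1)) *
          (-ρ * Real.exp (-ρ / μ1) * (1 - Real.exp (-ρ / μ2))
            - μ1 * Real.exp (-ρ / μ1) * (1 - Real.exp (-ρ / μ2))
            - (ρ * μ1 / (μ1 + μ2)) * Real.exp (-ρ * (μ1 + μ2) / (μ1 * μ2))
            - (μ1 ^ 2 * μ2 / (μ1 + μ2) ^ 2) * Real.exp (-ρ * (μ1 + μ2) / (μ1 * μ2))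
            + μ1 ^ 2 * μ2 / (μ1 + μ2) ^ 2
            + (μ1 ^ 2 / (μ1 + μ2)) * (1 - Real.exp (-ρ * (μ1 + μ2) / (μ1 * μ2))))
      + r2 * μ3 * (1 - Real.exp (-ρ / μ1)) *
          ((μ1 / (μ1 + μ2)) * (1 - Real.exp (-ρ * (μ1 + μ2) / (μ1 * μ2)))
            - Real.exp (-ρ / μ1) * (1 - Real.exp (-ρ / μ2))) := by
  -- abbreviations (as plain terms)
  -- Stage 1: integrate out w
  have hW : ∀ x x' y : ℝ,
      (∫ w in Set.Ioi (0:ℝ),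
        ((if w > ρ then (1:ℝ) else 0) *
            (r1 * w + (if x < ρ then (1:ℝ) else 0) * r2 * x + r2 * y)
          + (if w ≤ ρ then (1:ℝ) else 0) * (if x < ρ then (1:ℝ) else 0) *
            (if x' < x then (1:ℝ) else 0) * (r2 * x + r2 * y)) *
        ((1 / μ1) * Real.exp (-w / μ1)) * ((1 / μ1) * Real.exp (-x / μ1)) *
        ((1 / μ2) * Real.exp (-x' / μ2)) * ((1 / μ3) * Real.exp (-y / μ3)))
      = ((r1 * (ρ + μ1) + ((if x < ρ then (1:ℝ) else 0) * r2 * x + r2 * y))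
            * Real.exp (-ρ / μ1)
          + ((if x < ρ then (1:ℝ) else 0) * ((if x' < x then (1:ℝ) else 0)
              * (r2 * x + r2 * y))) * (1 - Real.exp (-ρ / μ1)))
        * ((1 / μ1) * Real.exp (-x / μ1)) * ((1 / μ2) * Real.exp (-x' / μ2))
        * ((1 / μ3) * Real.exp (-y / μ3)) := by
    intro x x' y
    rw [setIntegral_congr_fun (f := fun w =>
        ((if w > ρ then (1:ℝ) else 0) *
            (r1 * w + (if x < ρ then (1:ℝ) else 0) * r2 * x + r2 * y)
          + (if w ≤ ρ then (1:ℝ) else 0) * (if x < ρ then (1:ℝ) else 0) *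
            (if x' < x then (1:ℝ) else 0) * (r2 * x + r2 * y)) *
        ((1 / μ1) * Real.exp (-w / μ1)) * ((1 / μ1) * Real.exp (-x / μ1)) *
        ((1 / μ2) * Real.exp (-x' / μ2)) * ((1 / μ3) * Real.exp (-y / μ3)))
      (g := fun w =>
        (((if w > ρ then (1:ℝ) else 0)
            * (r1 * w + ((if x < ρ then (1:ℝ) else 0) * r2 * x + r2 * y))
          + (if w ≤ ρ then (1:ℝ) else 0) * ((if x < ρ then (1:ℝ) else 0)
              * ((if x' < x then (1:ℝ) else 0) * (r2 * x + r2 * y))))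
          * ((1 / μ1) * Real.exp (-w / μ1)))
        * ((1 / μ1) * Real.exp (-x / μ1)) * ((1 / μ2) * Real.exp (-x' / μ2))
        * ((1 / μ3) * Real.exp (-y / μ3)))
      measurableSet_Ioi (fun w _ => by ring),
      integral_mul_const, integral_mul_const, integral_mul_const,
      stage_w hμ1 hρ r1 _ _]
  simp only [hW]
  -- Stage 2: integrate out x (for x' > 0)
  have hX : ∀ y : ℝ, Set.EqOn
      (fun x' => ∫ x in Set.Ioi (0:ℝ),
        ((r1 * (ρ + μ1) + ((if x < ρ then (1:ℝ) else 0) * r2 * x + r2 * y))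
            * Real.exp (-ρ / μ1)
          + ((if x < ρ then (1:ℝ) else 0) * ((if x' < x then (1:ℝ) else 0)
              * (r2 * x + r2 * y))) * (1 - Real.exp (-ρ / μ1)))
        * ((1 / μ1) * Real.exp (-x / μ1)) * ((1 / μ2) * Real.exp (-x' / μ2))
        * ((1 / μ3) * Real.exp (-y / μ3)))
      (fun x' => (((r1 * (ρ + μ1) + r2 * y) * Real.exp (-ρ / μ1)
          + (((r2 * Real.exp (-ρ / μ1)) * (0 + μ1) + 0)
            - ((r2 * Real.exp (-ρ / μ1)) * (ρ + μ1) + 0) * Real.exp (-ρ / μ1))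
          + (if x' < ρ then
              ((r2 * (1 - Real.exp (-ρ / μ1))) * (x' + μ1)
                  + r2 * y * (1 - Real.exp (-ρ / μ1))) * Real.exp (-x' / μ1)
                - ((r2 * (1 - Real.exp (-ρ / μ1))) * (ρ + μ1)
                  + r2 * y * (1 - Real.exp (-ρ / μ1))) * Real.exp (-ρ / μ1)
            else 0)))
        * ((1 / μ2) * Real.exp (-x' / μ2)) * ((1 / μ3) * Real.exp (-y / μ3)))
      (Set.Ioi (0:ℝ)) := by
    intro y x' hx'
    dsimp only
    have heq : Set.EqOn (fun x =>
        ((r1 * (ρ + μ1) + ((if x < ρ then (1:ℝ) else 0) * r2 * x + r2 * y))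
            * Real.exp (-ρ / μ1)
          + ((if x < ρ then (1:ℝ) else 0) * ((if x' < x then (1:ℝ) else 0)
              * (r2 * x + r2 * y))) * (1 - Real.exp (-ρ / μ1)))
        * ((1 / μ1) * Real.exp (-x / μ1)) * ((1 / μ2) * Real.exp (-x' / μ2))
        * ((1 / μ3) * Real.exp (-y / μ3)))
        (fun x =>
        (((r1 * (ρ + μ1) + r2 * y) * Real.exp (-ρ / μ1)
            + (if x < ρ then (1:ℝ) else 0)
              * ((r2 * Real.exp (-ρ / μ1)) * x + 0)
            + (if x < ρ then (1:ℝ) else 0) * (if x' < x then (1:ℝ) else 0)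
              * ((r2 * (1 - Real.exp (-ρ / μ1))) * x
                + r2 * y * (1 - Real.exp (-ρ / μ1))))
          * ((1 / μ1) * Real.exp (-x / μ1)))
        * ((1 / μ2) * Real.exp (-x' / μ2)) * ((1 / μ3) * Real.exp (-y / μ3)))
        (Set.Ioi (0:ℝ)) := fun x _ => by ring
    rw [setIntegral_congr_fun measurableSet_Ioi heq,
      integral_mul_const, integral_mul_const,
      stage_x hμ1 hρ hx' ((r1 * (ρ + μ1) + r2 * y) * Real.exp (-ρ / μ1))
        (r2 * Real.exp (-ρ / μ1)) 0 (r2 * (1 - Real.exp (-ρ / μ1)))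
        (r2 * y * (1 - Real.exp (-ρ / μ1)))]
  -- Stages 3 and 4 combined pointwise in y
  have hfinal : Set.EqOn
      (fun y => ∫ x' in Set.Ioi (0:ℝ), ∫ x in Set.Ioi (0:ℝ),
        ((r1 * (ρ + μ1) + ((if x < ρ then (1:ℝ) else 0) * r2 * x + r2 * y))
            * Real.exp (-ρ / μ1)
          + ((if x < ρ then (1:ℝ) else 0) * ((if x' < x then (1:ℝ) else 0)
              * (r2 * x + r2 * y))) * (1 - Real.exp (-ρ / μ1)))
        * ((1 / μ1) * Real.exp (-x / μ1)) * ((1 / μ2) * Real.exp (-x' / μ2))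
        * ((1 / μ3) * Real.exp (-y / μ3)))
      (fun y =>
        ((r2 * Real.exp (-ρ / μ1)
            + (μ1 * μ2 / (μ1 + μ2)) * (r2 * (1 - Real.exp (-ρ / μ1)) / μ2)
            - (μ1 * μ2 / (μ1 + μ2)) * (r2 * (1 - Real.exp (-ρ / μ1)) / μ2)
                * Real.exp (-ρ * (μ1 + μ2) / (μ1 * μ2))
            - r2 * (1 - Real.exp (-ρ / μ1)) * Real.exp (-ρ / μ1)
                * (1 - Real.exp (-ρ / μ2))) * y
          + ((r1 * (ρ + μ1)) * Real.exp (-ρ / μ1)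
              + r2 * Real.exp (-ρ / μ1) * μ1
              - r2 * Real.exp (-ρ / μ1) * (ρ + μ1) * Real.exp (-ρ / μ1)
            + (μ1 * μ2 / (μ1 + μ2)) * (r2 * (1 - Real.exp (-ρ / μ1)) / μ2
                * (μ1 * μ2 / (μ1 + μ2))
              + r2 * (1 - Real.exp (-ρ / μ1)) * μ1 / μ2)
            - (μ1 * μ2 / (μ1 + μ2)) * (r2 * (1 - Real.exp (-ρ / μ1)) / μ2
                * (ρ + μ1 * μ2 / (μ1 + μ2))
              + r2 * (1 - Real.exp (-ρ / μ1)) * μ1 / μ2)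
                * Real.exp (-ρ * (μ1 + μ2) / (μ1 * μ2))
            - r2 * (1 - Real.exp (-ρ / μ1)) * (ρ + μ1) * Real.exp (-ρ / μ1)
                * (1 - Real.exp (-ρ / μ2))))
        * ((1 / μ3) * Real.exp (-y / μ3)))
      (Set.Ioi (0:ℝ)) := by
    intro y _
    dsimp only
    rw [setIntegral_congr_fun measurableSet_Ioi (hX y)]
    have heq2 : Set.EqOn (fun x' =>
        (((r1 * (ρ + μ1) + r2 * y) * Real.exp (-ρ / μ1)
          + (((r2 * Real.exp (-ρ / μ1)) * (0 + μ1) + 0)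
            - ((r2 * Real.exp (-ρ / μ1)) * (ρ + μ1) + 0) * Real.exp (-ρ / μ1))
          + (if x' < ρ then
              ((r2 * (1 - Real.exp (-ρ / μ1))) * (x' + μ1)
                  + r2 * y * (1 - Real.exp (-ρ / μ1))) * Real.exp (-x' / μ1)
                - ((r2 * (1 - Real.exp (-ρ / μ1))) * (ρ + μ1)
                  + r2 * y * (1 - Real.exp (-ρ / μ1))) * Real.exp (-ρ / μ1)
            else 0)))
        * ((1 / μ2) * Real.exp (-x' / μ2)) * ((1 / μ3) * Real.exp (-y / μ3)))
        (fun x' =>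
        ((((r1 * (ρ + μ1) + r2 * y) * Real.exp (-ρ / μ1)
            + r2 * Real.exp (-ρ / μ1) * μ1
            - r2 * Real.exp (-ρ / μ1) * (ρ + μ1) * Real.exp (-ρ / μ1))
          + (if x' < ρ then (1:ℝ) else 0)
            * (((r2 * (1 - Real.exp (-ρ / μ1))) * x'
                + (r2 * (1 - Real.exp (-ρ / μ1)) * μ1
                  + r2 * y * (1 - Real.exp (-ρ / μ1)))) * Real.exp (-x' / μ1)
              + (-((r2 * (1 - Real.exp (-ρ / μ1))) * (ρ + μ1)
                  + r2 * y * (1 - Real.exp (-ρ / μ1))) * Real.exp (-ρ / μ1))))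
          * ((1 / μ2) * Real.exp (-x' / μ2)))
        * ((1 / μ3) * Real.exp (-y / μ3)))
        (Set.Ioi (0:ℝ)) := fun x' _ => by dsimp only; split_ifs with h <;> ring
    rw [setIntegral_congr_fun measurableSet_Ioi heq2, integral_mul_const,
      stage_xp hμ1 hμ2 hρ _ _ _ _]
    ring
  rw [setIntegral_congr_fun measurableSet_Ioi hfinal,
    fb_density_Ioi hμ3 le_rfl _ _]
  have h1 : Real.exp (-(0:ℝ) / μ3) = 1 := by norm_num
  rw [h1]
  have hμ12 : (μ1 : ℝ) + μ2 ≠ 0 := by positivity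
  field_simp
  ring
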